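/- A real number x of the form a + bφ with a, b ∈ ℤ has a multiplicative inverse of the same form (i.e., x is a unit of ℤ[φ]) if and only if x = φ^k or x = −φ^k for some integer k. Equivalently, the unit group of the ring ℤ[φ] ⊂ ℝ is exactly {±φ^k : k ∈ ℤ}. -/

import Mathlib

noncomputable def φ : ℝ := (1 + Real.sqrt 5) / 2

/-- The golden integer ring `ℤ[φ]` as a subset of `ℝ`. -/
def Zφ : Set ℝ := {x | ∃ a b : ℤ, x = (a : ℝ) + (b : ℝ) * φ}

lemma sqrt5_sq : Real.sqrt 5 ^ 2 = 5 := Real.sq_sqrt (by norm_num)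

lemma sqrt5_gt : (2 : ℝ) < Real.sqrt 5 := by
  rw [show (2:ℝ) = Real.sqrt 4 by
    rw [show (4:ℝ) = 2^2 by norm_num, Real.sqrt_sq (by norm_num)]]
  exact Real.sqrt_lt_sqrt (by norm_num) (by norm_num)

lemma sqrt5_lt : Real.sqrt 5 < 2.5 := by
  rw [Real.sqrt_lt' (by norm_num)]; norm_num

lemma phi_sq : φ ^ 2 = φ + 1 := by
  have h := sqrt5_sq
  unfold φ
  nlinarith [h]

lemma phi_gt : (1.5 : ℝ) < φ := by
  have := sqrt5_gt; unfold φ; linarith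

lemma phi_lt : φ < 1.75 := by
  have := sqrt5_lt; unfold φ; linarith

lemma phi_pos : (0 : ℝ) < φ := by linarith [phi_gt]

lemma phi_ne_zero : φ ≠ 0 := ne_of_gt phi_pos

lemma one_lt_phi : (1 : ℝ) < φ := by linarith [phi_gt]

lemma mul_pair (a b c d : ℤ) :
    ((a : ℝ) + b * φ) * ((c : ℝ) + d * φ) =
      ((a * c + b * d : ℤ) : ℝ) + ((a * d + b * c + b * d : ℤ) : ℝ) * φ := by
  push_cast
  linear_combination (b : ℝ) * d * phi_sq

lemma Zφ_mul {x y : ℝ} (hx : x ∈ Zφ) (hy : y ∈ Zφ) : x * y ∈ Zφ := by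
  obtain ⟨a, b, rfl⟩ := hx
  obtain ⟨c, d, rfl⟩ := hy
  exact ⟨a * c + b * d, a * d + b * c + b * d, mul_pair a b c d⟩

lemma Zφ_neg {x : ℝ} (hx : x ∈ Zφ) : -x ∈ Zφ := by
  obtain ⟨a, b, rfl⟩ := hx
  exact ⟨-a, -b, by push_cast; ring⟩

lemma phi_mem : φ ∈ Zφ := ⟨0, 1, by push_cast; ring⟩

lemma one_mem : (1 : ℝ) ∈ Zφ := ⟨1, 0, by push_cast; ring⟩

lemma phi_inv : φ⁻¹ = φ - 1 := by
  have h : φ * (φ - 1) = 1 := by linear_combination phi_sq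
  exact inv_eq_of_mul_eq_one_right h

lemma phi_inv_mem : φ⁻¹ ∈ Zφ := by
  rw [phi_inv]; exact ⟨-1, 1, by push_cast; ring⟩

lemma Zφ_pow {x : ℝ} (hx : x ∈ Zφ) (n : ℕ) : x ^ n ∈ Zφ := by
  induction n with
  | zero => simpa using one_mem
  | succ n ih => rw [pow_succ]; exact Zφ_mul ih hx

lemma phi_zpow_mem (k : ℤ) : φ ^ k ∈ Zφ := by
  cases k with
  | ofNat n => rw [Int.ofNat_eq_coe, zpow_natCast]; exact Zφ_pow phi_mem n
  | negSucc n =>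
      rw [zpow_negSucc, ← inv_pow]
      exact Zφ_pow phi_inv_mem (n + 1)

lemma sqrt5_irr : Irrational (Real.sqrt 5) := by
  have : Nat.Prime 5 := by norm_num
  simpa using this.irrational_sqrt

/-- Uniqueness of representation. -/
lemma pair_eq_zero {p q : ℤ} (h : (p : ℝ) + q * φ = 0) : p = 0 ∧ q = 0 := by
  by_cases hq : q = 0
  · subst hq
    simp at h
    exact ⟨by exact_mod_cast h, rfl⟩
  · exfalso
    have hq' : (q : ℝ) ≠ 0 := Int.cast_ne_zero.mpr hq
    have hphi : φ * q = -(p : ℝ) := by nlinarith [h]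
    have hs : Real.sqrt 5 = 2 * φ - 1 := by unfold φ; ring
    refine sqrt5_irr ⟨(-2 * (p : ℚ) - q) / (q : ℚ), ?_⟩
    push_cast
    rw [div_eq_iff hq']
    have h5q : Real.sqrt 5 * q = 2 * (φ * q) - q := by rw [hs]; ring
    linarith [hphi, h5q]

/-- Key lemma: a unit in `[1, φ)` equals `1`. -/
lemma unit_Ico (a b c d : ℤ) (h : ((a : ℝ) + b * φ) * ((c : ℝ) + d * φ) = 1)
    (h1 : 1 ≤ (a : ℝ) + b * φ) (h2 : (a : ℝ) + b * φ < φ) :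
    (a : ℝ) + b * φ = 1 := by
  -- extract integer equations
  have hpair := mul_pair a b c d
  rw [h] at hpair
  have h0 : ((a * c + b * d - 1 : ℤ) : ℝ) + ((a * d + b * c + b * d : ℤ) : ℝ) * φ = 0 := by
    push_cast
    push_cast at hpair
    linarith
  obtain ⟨e1, e2⟩ := pair_eq_zero h0
  have e1 : a * c + b * d = 1 := by omega
  -- norm multiplicativity
  have hNmul : (a ^ 2 + a * b - b ^ 2) * (c ^ 2 + c * d - d ^ 2) =
      (a * c + b * d) ^ 2 + (a * c + b * d) * (a * d + b * c + b * d)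
        - (a * d + b * c + b * d) ^ 2 := by ring
  rw [e1, e2] at hNmul
  simp at hNmul
  have hN : a ^ 2 + a * b - b ^ 2 = 1 ∨ a ^ 2 + a * b - b ^ 2 = -1 :=
    Int.isUnit_iff.mp (IsUnit.of_mul_eq_one _ hNmul)
  -- conjugate
  have hxx' : ((a : ℝ) + b * φ) * (((a : ℝ) + b) - b * φ)
      = ((a ^ 2 + a * b - b ^ 2 : ℤ) : ℝ) := by
    push_cast
    linear_combination (-(b:ℝ)^2) * phi_sq
  have hx'le : ((a : ℝ) + b) - b * φ ≤ 1 ∧ -1 ≤ ((a : ℝ) + b) - b * φ := by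
    rcases hN with hN | hN <;> rw [hN] at hxx' <;> push_cast at hxx' <;>
      constructor <;> nlinarith
  have hphigt := phi_gt
  have hphilt := phi_lt
  have hb0 : 0 ≤ b := by
    by_contra hb
    push_neg at hb
    have hb' : b ≤ -1 := by omega
    have : (b : ℝ) ≤ -1 := by exact_mod_cast hb'
    nlinarith [hx'le.1]
  have hb1 : b ≤ 1 := by
    by_contra hb
    push_neg at hb
    have : (2 : ℝ) ≤ (b : ℝ) := by exact_mod_cast hb
    nlinarith [hx'le.2]
  interval_cases b
  · -- b = 0
    have h1' : (1 : ℝ) ≤ (a : ℝ) := by push_cast at h1; linarith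
    have h2' : (a : ℝ) < 2 := by push_cast at h2; linarith
    have ha : a = 1 := by
      have e1 : (1 : ℤ) ≤ a := by exact_mod_cast h1'
      have e2 : a < 2 := by exact_mod_cast h2'
      omega
    subst ha
    norm_num
  · -- b = 1 : contradiction
    exfalso
    have h1' : (1 : ℝ) ≤ (a : ℝ) + φ := by push_cast at h1; linarith
    have h2' : (a : ℝ) < 0 := by push_cast at h2; linarith
    have ha' : a ≤ -1 := by
      have : a < 0 := by exact_mod_cast h2'
      omega
    have : (a : ℝ) ≤ -1 := by exact_mod_cast ha'
    linarith

/-- Positive units are powers of φ. -/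
lemma pos_unit (x : ℝ) (hx : x ∈ Zφ) (y : ℝ) (hy : y ∈ Zφ) (hxy : x * y = 1)
    (hpos : 0 < x) : ∃ k : ℤ, x = φ ^ k := by
  obtain ⟨k, hk1, hk2⟩ := exists_mem_Ico_zpow hpos one_lt_phi
  refine ⟨k, ?_⟩
  have hzk : (0 : ℝ) < φ ^ k := zpow_pos phi_pos k
  set z : ℝ := x * φ ^ (-k) with hz
  have hz_mem : z ∈ Zφ := Zφ_mul hx (phi_zpow_mem (-k))
  have hw_mem : y * φ ^ k ∈ Zφ := Zφ_mul hy (phi_zpow_mem k)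
  have hzw : z * (y * φ ^ k) = 1 := by
    rw [hz]
    have : φ ^ (-k) * φ ^ k = 1 := by
      rw [← zpow_add₀ phi_ne_zero]; simp
    calc x * φ ^ (-k) * (y * φ ^ k) = (x * y) * (φ ^ (-k) * φ ^ k) := by ring
    _ = 1 := by rw [hxy, this, one_mul]
  have hz1 : 1 ≤ z := by
    rw [hz, zpow_neg, ← div_eq_mul_inv, le_div_iff₀ hzk, one_mul]
    exact hk1
  have hz2 : z < φ := by
    rw [hz, zpow_neg, ← div_eq_mul_inv, div_lt_iff₀ hzk, ← zpow_one_add₀ phi_ne_zero]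
    rw [show (1 : ℤ) + k = k + 1 by ring]
    exact hk2
  obtain ⟨a, b, hab⟩ := hz_mem
  obtain ⟨c, d, hcd⟩ := hw_mem
  have := unit_Ico a b c d (by rw [← hab, ← hcd]; exact hzw) (by rw [← hab]; exact hz1)
    (by rw [← hab]; exact hz2)
  rw [← hab] at this
  have hx' : x = (φ ^ (-k))⁻¹ := eq_inv_of_mul_eq_one_left this
  rw [hx', ← zpow_neg, neg_neg]

/-- `x ∈ ℤ[φ]` is a unit of `ℤ[φ]` iff `x = ±φ^k` for some integer `k`. -/
theorem golden_units (x : ℝ) (hx : x ∈ Zφ) :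
    (∃ y ∈ Zφ, x * y = 1) ↔ ∃ k : ℤ, x = φ ^ k ∨ x = -φ ^ k := by
  constructor
  · rintro ⟨y, hy, hxy⟩
    have hx0 : x ≠ 0 := by
      intro h; rw [h, zero_mul] at hxy; norm_num at hxy
    rcases lt_or_gt_of_ne hx0 with hneg | hpos
    · have h1 : (-x) * (-y) = 1 := by rw [neg_mul_neg]; exact hxy
      obtain ⟨k, hk⟩ := pos_unit (-x) (Zφ_neg hx) (-y) (Zφ_neg hy) h1 (by linarith)
      exact ⟨k, Or.inr (by linarith)⟩
    · obtain ⟨k, hk⟩ := pos_unit x hx y hy hxy hpos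
      exact ⟨k, Or.inl hk⟩
  · rintro ⟨k, hk | hk⟩
    · refine ⟨φ ^ (-k), phi_zpow_mem (-k), ?_⟩
      rw [hk, ← zpow_add₀ phi_ne_zero]; norm_num
    · refine ⟨-φ ^ (-k), Zφ_neg (phi_zpow_mem (-k)), ?_⟩
      rw [hk, neg_mul_neg, ← zpow_add₀ phi_ne_zero]; norm_num
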